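/- arXiv:math/0602479 — 2 statements merged into one kernel-verified Lean document; each statement's English description precedes it below -/
import Mathlib

section
/- Let P be a Markov kernel on a measurable space X satisfying the Doeblin condition P(x,·) ≥ δν for a probability measure ν and some δ > 0. Then the map μ ↦ P*μ is a contraction with constant (1 − δ) on the space of probability measures equipped with the total variation distance; consequently there exists a unique invariant probability measure μ⋆ with P*μ⋆ = μ⋆. -/
open MeasureTheory ProbabilityTheory
open scoped ENNReal NNReal

/-- Total variation distance between two measures, as the supremum over measurable sets of
the absolute difference of the (real-valued) measures. -/
noncomputable def tvDist {X : Type*} [MeasurableSpace X] (μ₁ μ₂ : Measure X) : ℝ :=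
  ⨆ s : {s : Set X // MeasurableSet s}, |(μ₁ s).toReal - (μ₂ s).toReal|

section Aux

variable {X : Type*} [MeasurableSpace X]

lemma tv_abs_le_one (μ₁ μ₂ : Measure X) [IsProbabilityMeasure μ₁] [IsProbabilityMeasure μ₂]
    (s : Set X) : |(μ₁ s).toReal - (μ₂ s).toReal| ≤ 1 := by
  have h1 : (μ₁ s).toReal ≤ 1 := by
    have := ENNReal.toReal_mono ENNReal.one_ne_top (prob_le_one (μ := μ₁) (s := s))
    simpa using this
  have h2 : (μ₂ s).toReal ≤ 1 := by
    have := ENNReal.toReal_mono ENNReal.one_ne_top (prob_le_one (μ := μ₂) (s := s))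
    simpa using this
  have h3 : (0:ℝ) ≤ (μ₁ s).toReal := ENNReal.toReal_nonneg
  have h4 : (0:ℝ) ≤ (μ₂ s).toReal := ENNReal.toReal_nonneg
  rw [abs_le]
  constructor <;> linarith

lemma tv_bddAbove (μ₁ μ₂ : Measure X) [IsProbabilityMeasure μ₁] [IsProbabilityMeasure μ₂] :
    BddAbove (Set.range fun s : {s : Set X // MeasurableSet s} =>
      |(μ₁ s).toReal - (μ₂ s).toReal|) := by
  refine ⟨1, ?_⟩
  rintro x ⟨s, rfl⟩
  exact tv_abs_le_one μ₁ μ₂ s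

lemma le_tvDist (μ₁ μ₂ : Measure X) [IsProbabilityMeasure μ₁] [IsProbabilityMeasure μ₂]
    {s : Set X} (hs : MeasurableSet s) :
    |(μ₁ s).toReal - (μ₂ s).toReal| ≤ tvDist μ₁ μ₂ :=
  le_ciSup (tv_bddAbove μ₁ μ₂) ⟨s, hs⟩

lemma tvDist_nonneg (μ₁ μ₂ : Measure X) [IsProbabilityMeasure μ₁] [IsProbabilityMeasure μ₂] :
    0 ≤ tvDist μ₁ μ₂ :=
  le_trans (abs_nonneg _) (le_tvDist μ₁ μ₂ MeasurableSet.empty)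

lemma tvDist_le (μ₁ μ₂ : Measure X) {b : ℝ}
    (h : ∀ s : Set X, MeasurableSet s → |(μ₁ s).toReal - (μ₂ s).toReal| ≤ b) :
    tvDist μ₁ μ₂ ≤ b := by
  haveI : Nonempty {s : Set X // MeasurableSet s} := ⟨⟨∅, MeasurableSet.empty⟩⟩
  exact ciSup_le fun s => h s.1 s.2

/-- Key estimate via the Hahn decomposition: for a measurable function bounded by `c`,
the integrals against two probability measures differ by at most `c * tvDist`. -/
lemma lintegral_le_lintegral_add_tv (μ₁ μ₂ : Measure X)
    [IsProbabilityMeasure μ₁] [IsProbabilityMeasure μ₂]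
    {f : X → ℝ≥0∞} (hf : Measurable f) {c : ℝ≥0∞} (hc : c ≠ ∞) (hfc : ∀ x, f x ≤ c) :
    (∫⁻ x, f x ∂μ₁).toReal ≤ (∫⁻ x, f x ∂μ₂).toReal + c.toReal * tvDist μ₁ μ₂ := by
  obtain ⟨s, hs, hle, hge⟩ := hahn_decomposition (μ := μ₁) (ν := μ₂)
  have hres1 : μ₂.restrict s ≤ μ₁.restrict s := by
    rw [Measure.le_iff]
    intro t ht
    rw [Measure.restrict_apply ht, Measure.restrict_apply ht]
    exact hle _ (ht.inter hs) Set.inter_subset_right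
  have hres2 : μ₁.restrict sᶜ ≤ μ₂.restrict sᶜ := by
    rw [Measure.le_iff]
    intro t ht
    rw [Measure.restrict_apply ht, Measure.restrict_apply ht]
    exact hge _ (ht.inter hs.compl) Set.inter_subset_right
  set ρ : Measure X := μ₁.restrict s - μ₂.restrict s with hρdef
  have hρ : ρ + μ₂.restrict s = μ₁.restrict s := Measure.sub_add_cancel_of_le hres1
  have hρuniv : ρ Set.univ = μ₁ s - μ₂ s := by
    rw [hρdef, Measure.sub_apply MeasurableSet.univ hres1]
    simp
  have hsub_le : μ₂ s ≤ μ₁ s := hle s hs subset_rfl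
  have key : ∫⁻ x, f x ∂μ₁ ≤ ∫⁻ x, f x ∂μ₂ + c * (μ₁ s - μ₂ s) := by
    have h1 : ∫⁻ x in s, f x ∂μ₁ + ∫⁻ x in sᶜ, f x ∂μ₁ = ∫⁻ x, f x ∂μ₁ :=
      lintegral_add_compl f hs
    have h2 : ∫⁻ x in s, f x ∂μ₂ + ∫⁻ x in sᶜ, f x ∂μ₂ = ∫⁻ x, f x ∂μ₂ :=
      lintegral_add_compl f hs
    have h3 : ∫⁻ x in s, f x ∂μ₁ = ∫⁻ x, f x ∂ρ + ∫⁻ x in s, f x ∂μ₂ := by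
      rw [← hρ, lintegral_add_measure]
    have h4 : ∫⁻ x, f x ∂ρ ≤ c * (μ₁ s - μ₂ s) := by
      calc ∫⁻ x, f x ∂ρ ≤ ∫⁻ _, c ∂ρ := lintegral_mono hfc
        _ = c * ρ Set.univ := lintegral_const c
        _ = c * (μ₁ s - μ₂ s) := by rw [hρuniv]
    have h5 : ∫⁻ x in sᶜ, f x ∂μ₁ ≤ ∫⁻ x in sᶜ, f x ∂μ₂ :=
      lintegral_mono' hres2 le_rfl
    calc ∫⁻ x, f x ∂μ₁ = ∫⁻ x in s, f x ∂μ₁ + ∫⁻ x in sᶜ, f x ∂μ₁ := h1.symm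
      _ = (∫⁻ x, f x ∂ρ + ∫⁻ x in s, f x ∂μ₂) + ∫⁻ x in sᶜ, f x ∂μ₁ := by rw [h3]
      _ ≤ (c * (μ₁ s - μ₂ s) + ∫⁻ x in s, f x ∂μ₂) + ∫⁻ x in sᶜ, f x ∂μ₂ :=
          add_le_add (add_le_add h4 le_rfl) h5
      _ = (∫⁻ x in s, f x ∂μ₂ + ∫⁻ x in sᶜ, f x ∂μ₂) + c * (μ₁ s - μ₂ s) := by ring
      _ = ∫⁻ x, f x ∂μ₂ + c * (μ₁ s - μ₂ s) := by rw [h2]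
  have hfin : ∀ (μ : Measure X) [IsProbabilityMeasure μ], ∫⁻ x, f x ∂μ ≠ ∞ := by
    intro μ hμ
    refine ne_top_of_le_ne_top (by simpa using hc) ?_
    calc ∫⁻ x, f x ∂μ ≤ ∫⁻ _, c ∂μ := lintegral_mono hfc
      _ = c := by rw [lintegral_const, measure_univ, mul_one]
  have hcd : c * (μ₁ s - μ₂ s) ≠ ∞ :=
    ENNReal.mul_ne_top hc (ne_top_of_le_ne_top (measure_ne_top μ₁ s) tsub_le_self)
  have := ENNReal.toReal_mono (by
      exact ENNReal.add_ne_top.2 ⟨hfin μ₂, hcd⟩) key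
  rw [ENNReal.toReal_add (hfin μ₂) hcd, ENNReal.toReal_mul] at this
  refine le_trans this ?_
  have hterm : (μ₁ s - μ₂ s).toReal ≤ tvDist μ₁ μ₂ := by
    rw [ENNReal.toReal_sub_of_le hsub_le (measure_ne_top μ₁ s)]
    exact le_trans (le_abs_self _) (le_tvDist μ₁ μ₂ hs)
  exact add_le_add le_rfl (mul_le_mul_of_nonneg_left hterm ENNReal.toReal_nonneg)

end Aux

set_option maxHeartbeats 1000000 in
/-- **Doeblin's theorem.** Under the minorization condition `P x ≥ δ • ν`, the map
`μ ↦ P*μ = μ.bind P` is a `(1 − δ)`-contraction in total variation on probability measures,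
and consequently there is a unique invariant probability measure. -/
theorem doeblin_tv_contraction_and_unique_invariant
    {X : Type*} [MeasurableSpace X]
    (P : Kernel X X) [IsMarkovKernel P]
    (δ : ℝ) (hδ : 0 < δ)
    (ν : Measure X) [IsProbabilityMeasure ν]
    (hDoeblin : ∀ x : X, ENNReal.ofReal δ • ν ≤ P x) :
    (∀ μ₁ μ₂ : Measure X, IsProbabilityMeasure μ₁ → IsProbabilityMeasure μ₂ →
        tvDist (μ₁.bind P) (μ₂.bind P) ≤ (1 - δ) * tvDist μ₁ μ₂) ∧
    (∃! μstar : Measure X,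
        IsProbabilityMeasure μstar ∧ μstar.bind P = μstar) := by
  -- X is nonempty since it carries a probability measure
  have hX : Nonempty X := by
    rcases isEmpty_or_nonempty X with h | h
    · exfalso
      have h1 : ν Set.univ = 1 := measure_univ
      rw [Set.univ_eq_empty_iff.2 h] at h1
      simp at h1
    · exact h
  obtain ⟨x₀⟩ := hX
  -- δ ≤ 1
  have hδ1 : δ ≤ 1 := by
    have h := Measure.le_iff'.1 (hDoeblin x₀) Set.univ
    simp only [Measure.smul_apply, smul_eq_mul, measure_univ, mul_one] at h
    exact ENNReal.ofReal_le_one.1 h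
  have hδν : ∀ (x : X) (s : Set X), ENNReal.ofReal δ * ν s ≤ P x s := by
    intro x s
    have := Measure.le_iff'.1 (hDoeblin x) s
    simpa using this
  -- the contraction property
  have hcontr : ∀ μ₁ μ₂ : Measure X, IsProbabilityMeasure μ₁ → IsProbabilityMeasure μ₂ →
      tvDist (μ₁.bind P) (μ₂.bind P) ≤ (1 - δ) * tvDist μ₁ μ₂ := by
    intro μ₁ μ₂ h1 h2
    apply tvDist_le
    intro s hs
    -- the function f x = P x s - δ ν s is bounded by 1 - δ
    set f : X → ℝ≥0∞ := fun x => P x s - ENNReal.ofReal δ * ν s with hfdef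
    have hf : Measurable f := (P.measurable_coe hs).sub measurable_const
    have hfc : ∀ x, f x ≤ ENNReal.ofReal (1 - δ) := by
      intro x
      have hb : f x + ENNReal.ofReal δ ≤ 1 := by
        have h1 : f x + ENNReal.ofReal δ * ν s + ENNReal.ofReal δ * ν sᶜ
            = P x s + ENNReal.ofReal δ * ν sᶜ := by
          rw [hfdef]; dsimp only
          rw [tsub_add_cancel_of_le (hδν x s)]
        have h2 : P x s + ENNReal.ofReal δ * ν sᶜ ≤ P x s + P x sᶜ :=
          add_le_add le_rfl (hδν x sᶜ)
        have h3 : P x s + P x sᶜ = 1 := by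
          rw [measure_add_measure_compl hs]; exact measure_univ
        have h4 : f x + ENNReal.ofReal δ * ν s + ENNReal.ofReal δ * ν sᶜ
            = f x + ENNReal.ofReal δ * (ν s + ν sᶜ) := by ring
        have h5 : ν s + ν sᶜ = 1 := by
          rw [measure_add_measure_compl hs]; exact measure_univ
        calc f x + ENNReal.ofReal δ = f x + ENNReal.ofReal δ * (ν s + ν sᶜ) := by
              rw [h5, mul_one]
          _ = P x s + ENNReal.ofReal δ * ν sᶜ := by rw [← h4, h1]
          _ ≤ P x s + P x sᶜ := h2
          _ = 1 := h3
      have : ENNReal.ofReal (1 - δ) = 1 - ENNReal.ofReal δ := by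
        rw [ENNReal.ofReal_sub _ hδ.le, ENNReal.ofReal_one]
      rw [this]
      exact ENNReal.le_sub_of_add_le_right ENNReal.ofReal_ne_top hb
    have hfint : ∀ (μ : Measure X) [IsProbabilityMeasure μ],
        ∫⁻ x, f x ∂μ + ENNReal.ofReal δ * ν s = (μ.bind P) s := by
      intro μ hμ
      have hpt : ∀ x, f x + ENNReal.ofReal δ * ν s = P x s := fun x =>
        tsub_add_cancel_of_le (hδν x s)
      calc ∫⁻ x, f x ∂μ + ENNReal.ofReal δ * ν s
          = ∫⁻ x, f x ∂μ + (ENNReal.ofReal δ * ν s) * μ Set.univ := by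
            rw [measure_univ, mul_one]
        _ = ∫⁻ x, f x ∂μ + ∫⁻ _, ENNReal.ofReal δ * ν s ∂μ := by rw [lintegral_const]
        _ = ∫⁻ x, (f x + ENNReal.ofReal δ * ν s) ∂μ :=
            (lintegral_add_right _ measurable_const).symm
        _ = ∫⁻ x, P x s ∂μ := lintegral_congr hpt
        _ = (μ.bind P) s := (Measure.bind_apply hs P.measurable.aemeasurable).symm
    have hconst_ne : ENNReal.ofReal δ * ν s ≠ ∞ :=
      ENNReal.mul_ne_top ENNReal.ofReal_ne_top (measure_ne_top ν s)
    have hfin : ∀ (μ : Measure X) [IsProbabilityMeasure μ], ∫⁻ x, f x ∂μ ≠ ∞ := by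
      intro μ hμ
      refine ne_top_of_le_ne_top (b := ENNReal.ofReal (1 - δ)) ENNReal.ofReal_ne_top ?_
      calc ∫⁻ x, f x ∂μ ≤ ∫⁻ _, ENNReal.ofReal (1-δ) ∂μ := lintegral_mono hfc
        _ = ENNReal.ofReal (1-δ) := by rw [lintegral_const, measure_univ, mul_one]
    haveI := h1; haveI := h2
    have hdiff : ((μ₁.bind P) s).toReal - ((μ₂.bind P) s).toReal
        = (∫⁻ x, f x ∂μ₁).toReal - (∫⁻ x, f x ∂μ₂).toReal := by
      rw [← hfint μ₁, ← hfint μ₂,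
        ENNReal.toReal_add (hfin μ₁) hconst_ne, ENNReal.toReal_add (hfin μ₂) hconst_ne]
      ring
    have hbound1 := lintegral_le_lintegral_add_tv μ₁ μ₂ hf ENNReal.ofReal_ne_top hfc
    have hbound2 := lintegral_le_lintegral_add_tv μ₂ μ₁ hf ENNReal.ofReal_ne_top hfc
    rw [hdiff, abs_sub_le_iff]
    have htoReal : (ENNReal.ofReal (1-δ)).toReal = 1 - δ :=
      ENNReal.toReal_ofReal (by linarith)
    have hsymm : tvDist μ₂ μ₁ = tvDist μ₁ μ₂ := by
      unfold tvDist
      congr 1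
      funext t
      rw [abs_sub_comm]
    rw [htoReal] at hbound1 hbound2
    rw [hsymm] at hbound2
    exact ⟨by linarith, by linarith⟩
  refine ⟨hcontr, ?_⟩
  -- uniqueness helper
  have huniq : ∀ μ₁ μ₂ : Measure X, IsProbabilityMeasure μ₁ → IsProbabilityMeasure μ₂ →
      μ₁.bind P = μ₁ → μ₂.bind P = μ₂ → μ₁ = μ₂ := by
    intro μ₁ μ₂ h1 h2 hf1 hf2
    haveI := h1; haveI := h2
    have h := hcontr μ₁ μ₂ h1 h2
    rw [hf1, hf2] at h
    have hnn := tvDist_nonneg μ₁ μ₂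
    have h0 : tvDist μ₁ μ₂ = 0 := by nlinarith
    ext s hs
    have hle := le_tvDist μ₁ μ₂ hs
    rw [h0] at hle
    have : (μ₁ s).toReal = (μ₂ s).toReal := by
      have := abs_nonneg ((μ₁ s).toReal - (μ₂ s).toReal)
      have habs : |(μ₁ s).toReal - (μ₂ s).toReal| = 0 := le_antisymm hle this
      have := abs_eq_zero.1 habs
      linarith
    exact (ENNReal.toReal_eq_toReal_iff' (measure_ne_top μ₁ s) (measure_ne_top μ₂ s)).1 this
  -- existence
  rcases eq_or_lt_of_le hδ1 with hδeq | hδlt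
  · -- δ = 1 : then P x = ν for every x, and ν is the fixed point
    subst hδeq
    have hPν : ∀ x, P x = ν := by
      intro x
      have hle : ∀ s, ν s ≤ P x s := by
        intro s
        have := hδν x s
        simpa using this
      ext s hs
      by_contra hne
      have h1 : ν s < P x s := lt_of_le_of_ne (hle s) (Ne.symm hne)
      have h2 : ν Set.univ < P x Set.univ := by
        rw [← measure_add_measure_compl hs, ← measure_add_measure_compl (μ := P x) hs]
        exact ENNReal.add_lt_add_of_lt_of_le (measure_ne_top _ _) h1 (hle sᶜ)
      rw [measure_univ, measure_univ] at h2
      exact lt_irrefl _ h2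
    have hfix : ν.bind P = ν := by
      ext s hs
      rw [Measure.bind_apply hs P.measurable.aemeasurable]
      calc ∫⁻ x, P x s ∂ν = ∫⁻ _, ν s ∂ν := lintegral_congr fun x => by rw [hPν x]
        _ = ν s * 1 := by rw [lintegral_const, measure_univ]
        _ = ν s := mul_one _
    exact ⟨ν, ⟨inferInstance, hfix⟩, fun μ' ⟨h1', h2'⟩ => huniq μ' ν h1' inferInstance h2' hfix⟩
  · -- δ < 1 : construct the invariant measure as a geometric series
    set dE : ℝ≥0∞ := ENNReal.ofReal δ with hdEdef
    set e : ℝ≥0∞ := ENNReal.ofReal (1 - δ) with hedef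
    have he0 : e ≠ 0 := by
      rw [hedef]
      simp only [ne_eq, ENNReal.ofReal_eq_zero, not_le]
      linarith
    have heT : e ≠ ∞ := ENNReal.ofReal_ne_top
    have hdE0 : dE ≠ 0 := by
      rw [hdEdef]
      simp only [ne_eq, ENNReal.ofReal_eq_zero, not_le]
      linarith
    have hdET : dE ≠ ∞ := ENNReal.ofReal_ne_top
    have hsum1 : dE + e = 1 := by
      rw [hdEdef, hedef, ← ENNReal.ofReal_add hδ.le (by linarith), ← ENNReal.ofReal_one]
      norm_num
    have hone_sub_e : 1 - e = dE := by
      rw [← hsum1]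
      exact (ENNReal.add_sub_cancel_right heT)
    have hone_sub_dE : 1 - dE = e := by
      rw [← hsum1, add_comm]
      exact (ENNReal.add_sub_cancel_right hdET)
    haveI hsmulfin : IsFiniteMeasure (dE • ν) := by
      refine ⟨?_⟩
      rw [Measure.smul_apply, smul_eq_mul, measure_univ, mul_one]
      exact lt_of_le_of_ne le_top hdET
    -- the residual kernel Q
    obtain ⟨Q, hQMarkov, hQapp⟩ : ∃ Q : Kernel X X, IsMarkovKernel Q ∧
        ∀ (x : X) (s : Set X), MeasurableSet s → Q x s = e⁻¹ * (P x s - dE * ν s) := by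
      refine ⟨{ toFun := fun x => e⁻¹ • (P x - dE • ν)
                measurable' := by
                  apply Measure.measurable_of_measurable_coe
                  intro s hs
                  simp_rw [Measure.smul_apply, smul_eq_mul,
                    Measure.sub_apply hs (hDoeblin _), Measure.smul_apply, smul_eq_mul]
                  exact ((P.measurable_coe hs).sub measurable_const).const_mul _ }, ?_, ?_⟩
      · refine ⟨fun x => ⟨?_⟩⟩
        show (e⁻¹ • (P x - dE • ν)) Set.univ = 1
        rw [Measure.smul_apply, smul_eq_mul,
          Measure.sub_apply MeasurableSet.univ (hDoeblin x), Measure.smul_apply, smul_eq_mul,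
          measure_univ, measure_univ, mul_one, hone_sub_dE]
        exact ENNReal.inv_mul_cancel he0 heT
      · intro x s hs
        show (e⁻¹ • (P x - dE • ν)) s = _
        rw [Measure.smul_apply, smul_eq_mul,
          Measure.sub_apply hs (hDoeblin x), Measure.smul_apply, smul_eq_mul]
    haveI := hQMarkov
    have hPdecomp : ∀ (x : X) (s : Set X), MeasurableSet s →
        P x s = dE * ν s + e * Q x s := by
      intro x s hs
      rw [hQapp x s hs, ← mul_assoc, ENNReal.mul_inv_cancel he0 heT, one_mul,
        add_tsub_cancel_of_le (hδν x s)]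
    -- the iterates of ν under Q
    obtain ⟨m, hm0, hmsucc⟩ : ∃ m : ℕ → Measure X, m 0 = ν ∧
        ∀ n, m (n + 1) = (m n).bind Q :=
      ⟨fun n => (fun μ : Measure X => μ.bind Q)^[n] ν, rfl,
        fun n => Function.iterate_succ_apply' _ n ν⟩
    have hmprob : ∀ n, IsProbabilityMeasure (m n) := by
      intro n
      induction n with
      | zero => rw [hm0]; infer_instance
      | succ n ih =>
        rw [hmsucc n]
        refine ⟨?_⟩
        rw [Measure.bind_apply MeasurableSet.univ Q.measurable.aemeasurable]
        haveI := ih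
        calc ∫⁻ x, Q x Set.univ ∂(m n) = ∫⁻ _, (1:ℝ≥0∞) ∂(m n) :=
              lintegral_congr fun x => measure_univ
          _ = 1 * (m n) Set.univ := lintegral_const 1
          _ = 1 := by rw [measure_univ, mul_one]
    obtain ⟨μstar, hμstar_apply, hμstar_lint⟩ : ∃ μstar : Measure X,
        (∀ s : Set X, MeasurableSet s → μstar s = ∑' n, dE * e ^ n * m n s) ∧
        (∀ g : X → ℝ≥0∞, ∫⁻ x, g x ∂μstar = ∑' n, dE * e ^ n * ∫⁻ x, g x ∂(m n)) := by
      refine ⟨Measure.sum (fun n => (dE * e ^ n) • m n), ?_, ?_⟩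
      · intro s hs
        rw [Measure.sum_apply _ hs]
        simp only [Measure.smul_apply, smul_eq_mul]
      · intro g
        rw [lintegral_sum_measure]
        exact tsum_congr fun n => lintegral_smul_measure _ _
    have hgeo : ∑' n : ℕ, dE * e ^ n = 1 := by
      rw [ENNReal.tsum_mul_left, ENNReal.tsum_geometric, hone_sub_e]
      exact ENNReal.mul_inv_cancel hdE0 hdET
    haveI hμstarprob : IsProbabilityMeasure μstar := by
      refine ⟨?_⟩
      rw [hμstar_apply Set.univ MeasurableSet.univ]
      calc ∑' n, dE * e ^ n * m n Set.univ = ∑' n, dE * e ^ n := by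
            apply tsum_congr
            intro n
            haveI := hmprob n
            rw [measure_univ, mul_one]
        _ = 1 := hgeo
    have hfix : μstar.bind P = μstar := by
      ext s hs
      rw [Measure.bind_apply hs P.measurable.aemeasurable]
      have hQbind : ∫⁻ x, Q x s ∂μstar = ∑' n, dE * e ^ n * m (n + 1) s := by
        rw [hμstar_lint (fun x => Q x s)]
        apply tsum_congr
        intro n
        congr 1
        rw [hmsucc n, Measure.bind_apply hs Q.measurable.aemeasurable]
      calc ∫⁻ x, P x s ∂μstar
          = ∫⁻ x, (dE * ν s + e * Q x s) ∂μstar :=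
            lintegral_congr fun x => hPdecomp x s hs
        _ = dE * ν s * μstar Set.univ + e * ∫⁻ x, Q x s ∂μstar := by
            rw [lintegral_add_left measurable_const, lintegral_const,
              lintegral_const_mul e (Q.measurable_coe hs)]
        _ = dE * ν s + e * ∑' n, dE * e ^ n * m (n + 1) s := by
            rw [measure_univ, mul_one, hQbind]
        _ = dE * ν s + ∑' n, dE * e ^ (n + 1) * m (n + 1) s := by
            rw [← ENNReal.tsum_mul_left]
            congr 1
            apply tsum_congr
            intro n
            ring
        _ = dE * e ^ 0 * m 0 s + ∑' n, dE * e ^ (n + 1) * m (n + 1) s := by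
            rw [hm0, pow_zero, mul_one]
        _ = ∑' n, dE * e ^ n * m n s :=
            (tsum_eq_zero_add' (f := fun n => dE * e ^ n * m n s) ENNReal.summable).symm
        _ = μstar s := (hμstar_apply s hs).symm
    exact ⟨μstar, ⟨hμstarprob, hfix⟩,
      fun μ' ⟨h1', h2'⟩ => huniq μ' μstar h1' hμstarprob h2' hfix⟩
end

section
/- Let V : H → [1,∞) be continuous, r ∈ (0,1), and ρ_r, ρ = ρ₁ the weighted path metrics defined by ρ_s(x,y) = inf_γ ∫₀¹ V^s(γ(t))‖γ'(t)‖dt. Suppose V(x) ≥ V_*(‖x‖) for a strictly increasing continuous V_* : [0,∞) → [1,∞) with V_*(a) → ∞ as a → ∞. Then for every δ > 0 and K > 0, the set C = {(x,y) : ρ_r(x,y) ≥ δ and ρ(x,y) < K} is bounded: there exists R > 0 such that ‖x‖ ∨ ‖y‖ ≤ R for every (x,y) ∈ C. -/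
/-- Cost of a path `γ` for the Lyapunov weight `V^r`. -/
noncomputable def pathCost {H : Type*} [NormedAddCommGroup H] [NormedSpace ℝ H]
    (V : H → ℝ) (r : ℝ) (γ : ℝ → H) : ℝ :=
  ∫ t in (0:ℝ)..1, (V (γ t)) ^ r * ‖deriv γ t‖

/-- The weighted path (pseudo-)metric `ρ_r(x,y) = inf_γ ∫₀¹ V^r(γ(t)) ‖γ'(t)‖ dt`. -/
noncomputable def rhoDist {H : Type*} [NormedAddCommGroup H] [NormedSpace ℝ H]
    (V : H → ℝ) (r : ℝ) (x y : H) : ℝ :=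
  sInf {c : ℝ | ∃ γ : ℝ → H, ContDiff ℝ 1 γ ∧ γ 0 = x ∧ γ 1 = y ∧ c = pathCost V r γ}

/-- **Lemma 3.11.** If `V(x) ≥ V_*(‖x‖)` with `V_*` strictly increasing, continuous and
tending to infinity, and `r ∈ (0,1)`, then `{(x,y) : ρ_r(x,y) ≥ δ, ρ(x,y) < K}` is a
bounded set. -/
theorem bounded_region_of_rho_bounds
    {H : Type*} [NormedAddCommGroup H] [NormedSpace ℝ H]
    (V : H → ℝ) (hVcont : Continuous V) (hV1 : ∀ x, 1 ≤ V x)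
    (Vlow : ℝ → ℝ) (hVlowmono : StrictMono Vlow) (hVlowcont : Continuous Vlow)
    (hVlow1 : ∀ a : ℝ, 0 ≤ a → 1 ≤ Vlow a)
    (hVlowtop : Filter.Tendsto Vlow Filter.atTop Filter.atTop)
    (hlow : ∀ x : H, Vlow ‖x‖ ≤ V x)
    (r : ℝ) (hr : r ∈ Set.Ioo (0 : ℝ) 1)
    (δ K : ℝ) (hδ : 0 < δ) (hK : 0 < K) :
    ∃ R : ℝ, 0 < R ∧ ∀ x y : H,
      δ ≤ rhoDist V r x y → rhoDist V 1 x y < K → ‖x‖ ≤ R ∧ ‖y‖ ≤ R := by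
  obtain ⟨hr0, hr1⟩ := hr
  -- choose M with `Vlow M ^ (r-1) * K < δ` and `0 ≤ M`
  have htend : Filter.Tendsto (fun a => Vlow a ^ (r - 1) * K) Filter.atTop (nhds 0) := by
    have h1 : Filter.Tendsto (fun b : ℝ => b ^ (r - 1)) Filter.atTop (nhds 0) := by
      have := tendsto_rpow_neg_atTop (y := 1 - r) (by linarith)
      simpa [neg_sub] using this
    simpa using (h1.comp hVlowtop).mul_const K
  obtain ⟨M₀, hM₀⟩ := Filter.eventually_atTop.1 (htend.eventually_lt_const hδ)
  set M : ℝ := max M₀ 0 with hMdef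
  have hMK : Vlow M ^ (r - 1) * K < δ := hM₀ M (le_max_left _ _)
  have hM0 : (0 : ℝ) ≤ M := le_max_right _ _
  have hm1 : (1 : ℝ) ≤ Vlow M := hVlow1 M hM0
  refine ⟨M + 2 * K + 1, by positivity, fun x y hδle hKlt => ?_⟩
  -- nonnegativity and basic bounds
  have hVpos : ∀ z : H, 0 < V z := fun z => lt_of_lt_of_le one_pos (hV1 z)
  have hcost_nonneg : ∀ s : ℝ, ∀ γ : ℝ → H, 0 ≤ pathCost V s γ := by
    intro s γ
    apply intervalIntegral.integral_nonneg zero_le_one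
    intro u _
    exact mul_nonneg (Real.rpow_nonneg (hVpos _).le _) (norm_nonneg _)
  have hbdd : ∀ s : ℝ, BddBelow {c : ℝ | ∃ γ : ℝ → H, ContDiff ℝ 1 γ ∧ γ 0 = x ∧ γ 1 = y ∧
      c = pathCost V s γ} := by
    intro s
    refine ⟨0, fun c hc => ?_⟩
    obtain ⟨γ, _, _, _, rfl⟩ := hc
    exact hcost_nonneg s γ
  have hne : {c : ℝ | ∃ γ : ℝ → H, ContDiff ℝ 1 γ ∧ γ 0 = x ∧ γ 1 = y ∧
      c = pathCost V 1 γ}.Nonempty := by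
    refine ⟨_, fun t : ℝ => x + t • (y - x), ?_, by simp, by simp, rfl⟩
    exact contDiff_const.add (contDiff_id.smul contDiff_const)
  -- get a near-optimal path for `ρ`
  obtain ⟨c, hcmem, hcK⟩ := (csInf_lt_iff (hbdd 1) hne).1 hKlt
  obtain ⟨γ, hγ, hγ0, hγ1, rfl⟩ := hcmem
  have hγc : Continuous γ := hγ.continuous
  have hγ'c : Continuous (deriv γ) := hγ.continuous_deriv le_rfl
  have hfc : Continuous fun t => ‖deriv γ t‖ := hγ'c.norm
  have hVγ : Continuous fun t => V (γ t) := hVcont.comp hγc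
  have hgc : Continuous fun t => V (γ t) ^ (1 : ℝ) * ‖deriv γ t‖ := by
    simp only [Real.rpow_one]; exact hVγ.mul hfc
  -- arclength estimate: every point of the path is within `K` of `x`
  have hmvt : ∀ t ∈ Set.Icc (0 : ℝ) 1, ‖γ t - γ 0‖ ≤ ∫ s in (0:ℝ)..t, ‖deriv γ s‖ := by
    have := image_norm_le_of_norm_deriv_right_le_deriv_boundary
      (f := fun t => γ t - γ 0) (f' := deriv γ) (a := 0) (b := 1)
      (((hγc.sub continuous_const).continuousOn))
      (fun u _ => (((hγ.differentiable one_ne_zero u).hasDerivAt.sub_const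
        (γ 0)).hasDerivWithinAt))
      (B := fun t => ∫ s in (0:ℝ)..t, ‖deriv γ s‖) (B' := fun t => ‖deriv γ t‖)
      (by simp)
      (fun u => intervalIntegral.integral_hasDerivAt_right
        (hfc.intervalIntegrable 0 u) (hfc.stronglyMeasurableAtFilter _ _)
        hfc.continuousAt)
      (fun u _ => le_rfl)
    exact fun t ht => this ht
  have hdist : ∀ t ∈ Set.Icc (0 : ℝ) 1, ‖γ t - x‖ < K := by
    intro t ht
    have h1 : ‖γ t - γ 0‖ ≤ ∫ s in (0:ℝ)..t, ‖deriv γ s‖ := hmvt t ht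
    have h2 : (∫ s in (0:ℝ)..t, ‖deriv γ s‖) ≤ ∫ s in (0:ℝ)..1, ‖deriv γ s‖ :=
      intervalIntegral.integral_mono_interval le_rfl ht.1 ht.2
        (Filter.Eventually.of_forall fun u => norm_nonneg _)
        (hfc.intervalIntegrable 0 1)
    have h3 : (∫ s in (0:ℝ)..1, ‖deriv γ s‖) ≤ pathCost V 1 γ := by
      apply intervalIntegral.integral_mono_on zero_le_one
        (hfc.intervalIntegrable 0 1) (hgc.intervalIntegrable 0 1)
      intro u _
      simpa [Real.rpow_one] using le_mul_of_one_le_left (norm_nonneg (deriv γ u)) (hV1 (γ u))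
    calc ‖γ t - x‖ = ‖γ t - γ 0‖ := by rw [hγ0]
      _ ≤ ∫ s in (0:ℝ)..1, ‖deriv γ s‖ := h1.trans h2
      _ ≤ pathCost V 1 γ := h3
      _ < K := hcK
  -- bound on `‖x‖`
  have hx : ‖x‖ ≤ M + K + 1 := by
    by_contra hxc
    push_neg at hxc
    -- lower bound for `V` along the path
    have hVlarge : ∀ t ∈ Set.Icc (0 : ℝ) 1, Vlow M ≤ V (γ t) := by
      intro t ht
      have h1 : M ≤ ‖γ t‖ := by
        have := norm_sub_norm_le (γ t) x
        have h2 := hdist t ht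
        have : ‖x‖ - ‖γ t‖ ≤ ‖γ t - x‖ := by
          have := norm_sub_norm_le x (γ t)
          simpa [norm_sub_rev] using this
        linarith
      exact (hVlowmono.monotone h1).trans (hlow (γ t))
    have hmpos : (0 : ℝ) < Vlow M := lt_of_lt_of_le one_pos hm1
    -- pointwise bound `V^r ≤ (Vlow M)^(r-1) * V`
    have hpw : ∀ t ∈ Set.Icc (0 : ℝ) 1,
        V (γ t) ^ r * ‖deriv γ t‖ ≤
          Vlow M ^ (r - 1) * (V (γ t) ^ (1 : ℝ) * ‖deriv γ t‖) := by
      intro t ht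
      have hVt : 0 < V (γ t) := hVpos _
      have h1 : V (γ t) ^ (r - 1) ≤ Vlow M ^ (r - 1) :=
        Real.rpow_le_rpow_of_nonpos hmpos (hVlarge t ht) (by linarith)
      have h2 : V (γ t) ^ r = V (γ t) ^ (r - 1) * V (γ t) := by
        rw [← Real.rpow_add_one hVt.ne' (r - 1)]; ring_nf
      rw [h2, Real.rpow_one, mul_assoc]
      exact mul_le_mul_of_nonneg_right h1
        (mul_nonneg hVt.le (norm_nonneg _))
    have hint : pathCost V r γ ≤ Vlow M ^ (r - 1) * pathCost V 1 γ := by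
      have := intervalIntegral.integral_mono_on (μ := MeasureTheory.volume) zero_le_one
        ((hVγ.rpow_const (fun u => Or.inr hr0.le)).mul hfc |>.intervalIntegrable 0 1)
        ((continuous_const.mul hgc).intervalIntegrable 0 1) hpw
      calc pathCost V r γ ≤ ∫ t in (0:ℝ)..1,
            Vlow M ^ (r - 1) * (V (γ t) ^ (1:ℝ) * ‖deriv γ t‖) := this
        _ = Vlow M ^ (r - 1) * pathCost V 1 γ := by
            rw [intervalIntegral.integral_const_mul]; rfl
    have hρr : rhoDist V r x y ≤ pathCost V r γ :=
      csInf_le (hbdd r) ⟨γ, hγ, hγ0, hγ1, rfl⟩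
    have hlast : Vlow M ^ (r - 1) * pathCost V 1 γ < Vlow M ^ (r - 1) * K :=
      mul_lt_mul_of_pos_left hcK (Real.rpow_pos_of_pos hmpos _)
    linarith
  constructor
  · linarith
  · have h1 := hdist 1 (by norm_num)
    rw [hγ1] at h1
    have := norm_sub_norm_le y x
    have h2 : ‖y‖ ≤ ‖x‖ + ‖y - x‖ := by
      have := norm_sub_norm_le y x; linarith [abs_nonneg (‖y‖ - ‖x‖)]
    calc ‖y‖ ≤ ‖x‖ + ‖y - x‖ := by
          have := norm_le_insert' y x
          linarith [norm_sub_norm_le y x, norm_add_le x (y - x)]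
      _ ≤ (M + K + 1) + K := by linarith
      _ ≤ M + 2 * K + 1 := by linarith
end
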